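/- Let n ≥ 1 and let K ⊆ ℝⁿ be a convex body. Then there exists an invertible affine map A : ℝⁿ → ℝⁿ such that A(K) ⊆ Bⁿ and for every unit vector a ∈ ℝⁿ one has h_{A(K)}(a) + h_{A(K)}(−a) ≥ 2/√n, where h_{A(K)}(a) = sup{⟨a,x⟩ : x ∈ A(K)} is the support function of A(K). (In particular, the width-to-circumradius ratio of A(K) satisfies w(A(K))/(2R(A(K))) ≥ 1/√n, so the maximum of w/2R over affine images of K is at least 1/√n.) -/

import Mathlib

open scoped InnerProductSpace
open Metric Set

private abbrev Eu (n : ℕ) := EuclideanSpace ℝ (Fin n)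

private lemma sq_mid_le_one {x y : ℝ} (h1 : -1 ≤ x) (h2 : x ≤ 1) (h3 : -1 ≤ y)
    (h4 : y ≤ 1) : ((x - y)/2)^2 ≤ 1 := by nlinarith

private lemma bernoulli_aux' : ∀ (k : ℕ) (x : ℝ), 0 ≤ x → (1+x)^k * (1 - k*x) ≤ 1 := by
  intro k
  induction k with
  | zero => intro x hx; simp
  | succ k ih =>
    intro x hx
    have h1 : (0:ℝ) ≤ 1 + x := by linarith
    push_cast
    have hk : (0:ℝ) ≤ (k:ℝ) := Nat.cast_nonneg k
    by_cases hc : 1 - ((k:ℝ)+1)*x ≤ 0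
    · have h2 : (0:ℝ) ≤ (1+x)^(k+1) := pow_nonneg h1 _
      nlinarith
    · push_neg at hc
      have key : (1+x) * (1 - ((k:ℝ)+1)*x) ≤ 1 - (k:ℝ)*x := by nlinarith [sq_nonneg x]
      have h3 : (0:ℝ) ≤ (1+x)^k := pow_nonneg h1 k
      have := ih x hx
      calc (1+x)^(k+1) * (1 - ((k:ℝ)+1)*x)
          = (1+x)^k * ((1+x)*(1 - ((k:ℝ)+1)*x)) := by ring
        _ ≤ (1+x)^k * (1 - (k:ℝ)*x) := mul_le_mul_of_nonneg_left key h3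
        _ ≤ 1 := this

private lemma det_aux {n : ℕ} (a : Eu n) (ha : ‖a‖ = 1) (c : ℝ) :
    LinearMap.det
      (((ContinuousLinearMap.id ℝ (Eu n) + c • (innerSL ℝ a).smulRight a) :
        Eu n →L[ℝ] Eu n) : Eu n →ₗ[ℝ] Eu n) = 1 + c := by
  classical
  set b := (EuclideanSpace.basisFun (Fin n) ℝ).toBasis with hb
  rw [← LinearMap.det_toMatrix b]
  have hmat : (LinearMap.toMatrix b b)
      (((ContinuousLinearMap.id ℝ (Eu n) + c • (innerSL ℝ a).smulRight a) :
        Eu n →L[ℝ] Eu n) : Eu n →ₗ[ℝ] Eu n)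
      = 1 + Matrix.replicateCol Unit (fun i => c * a i) * Matrix.replicateRow Unit (fun i => a i) := by
    ext i j
    rw [LinearMap.toMatrix_apply]
    have hbj : (b j : Eu n) = EuclideanSpace.single j 1 := by
      simp [hb, EuclideanSpace.basisFun_apply]
    have hinner : ⟪a, (b j : Eu n)⟫_ℝ = a j := by
      rw [hbj]
      simp [PiLp.inner_apply, EuclideanSpace.single_apply, RCLike.inner_apply]
    have happ : (((ContinuousLinearMap.id ℝ (Eu n) + c • (innerSL ℝ a).smulRight a) :
        Eu n →L[ℝ] Eu n) : Eu n →ₗ[ℝ] Eu n) (b j)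
        = b j + (c * a j) • a := by
      simp only [ContinuousLinearMap.coe_coe, ContinuousLinearMap.add_apply,
        ContinuousLinearMap.id_apply, ContinuousLinearMap.smul_apply,
        ContinuousLinearMap.smulRight_apply, innerSL_apply_apply, hinner, smul_smul]
    rw [happ]
    have hrepr : ∀ (x : Eu n) (i : Fin n), b.repr x i = x i := by
      intro x i
      simp [hb, OrthonormalBasis.coe_toBasis_repr_apply, EuclideanSpace.basisFun_repr]
    rw [map_add, Finsupp.add_apply]
    have h1 : b.repr (b j) i = if i = j then 1 else 0 := by
      simp [Module.Basis.repr_self, Finsupp.single_apply, eq_comm]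
    have h2 : b.repr ((c * a j) • a) i = (c * a j) * a i := by
      rw [map_smul, Finsupp.smul_apply, hrepr a i]; simp [mul_comm]
    rw [h1, h2]
    simp [Matrix.add_apply, Matrix.one_apply, Matrix.mul_apply, Matrix.replicateCol_apply,
      Matrix.replicateRow_apply]
    ring
  rw [hmat, Matrix.det_one_add_replicateCol_mul_replicateRow]
  have hsum : (dotProduct (fun i => a i) (fun i => c * a i)) = c := by
    have hnorm : ⟪a, a⟫_ℝ = 1 := by
      rw [real_inner_self_eq_norm_sq, ha]; norm_num
    rw [PiLp.inner_apply] at hnorm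
    simp only [RCLike.inner_apply, conj_trivial] at hnorm
    simp only [dotProduct]
    calc ∑ i, a i * (c * a i) = c * ∑ i, a i * a i := by
          rw [Finset.mul_sum]; congr 1; ext i; ring
      _ = c := by rw [hnorm, mul_one]
  rw [hsum]

set_option maxHeartbeats 1000000 in
private lemma squeeze {n : ℕ} (hn : 1 ≤ n) (a : Eu n) (ha : ‖a‖ = 1) (m w : ℝ)
    (hw0 : 0 ≤ w) (hm2 : m^2 ≤ 1) (hnw : (n:ℝ)*w^2 < 1) :
    ∃ M : Eu n →L[ℝ] Eu n, ∃ v : Eu n,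
      (∀ y : Eu n, ‖y‖ ≤ 1 → m - w ≤ ⟪a, y⟫_ℝ → ⟪a, y⟫_ℝ ≤ m + w → ‖M y + v‖ ≤ 1) ∧
      1 < |LinearMap.det ((M : Eu n →L[ℝ] Eu n) : Eu n →ₗ[ℝ] Eu n)| := by
  have hnpos : (0:ℝ) < n := by exact_mod_cast hn
  set u := w^2 with hudef
  have hu0 : 0 ≤ u := sq_nonneg w
  have hnu : (n:ℝ) * u < 1 := hnw
  set lam := (1 - (n:ℝ)*u)/((n:ℝ)*u + 1) with hlamdef
  have hden : (0:ℝ) < (n:ℝ)*u + 1 := by positivity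
  have hlam : 0 < lam := div_pos (by linarith) hden
  have hlamden : lam * ((n:ℝ)*u + 1) = 1 - (n:ℝ)*u := div_mul_cancel₀ _ (ne_of_gt hden)
  have hkey : (n:ℝ)*u*(1+lam) < 1 := by
    nlinarith [mul_nonneg (mul_nonneg hnpos.le hu0) hlam.le]
  have h1lam : (0:ℝ) < 1 + lam := by linarith
  set β := lam*m/(1+lam) with hβdef
  set Rsq := 1 + lam*u - lam*m^2/(1+lam) with hRsqdef
  have hRsqmul : Rsq*(1+lam) = (1+lam)*(1+lam*u) - lam*m^2 := by
    rw [hRsqdef]; field_simp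
  have hRsq_pos : 0 < Rsq := by nlinarith [mul_nonneg hlam.le hu0]
  have hRsq_le : Rsq ≤ 1 + lam*u := by
    rw [hRsqdef]
    have : 0 ≤ lam*m^2/(1+lam) := by positivity
    linarith
  set mu := Real.sqrt (1+lam) with hmudef
  set rho := Real.sqrt Rsq with hrhodef
  have hmusq : mu^2 = 1+lam := Real.sq_sqrt h1lam.le
  have hrhosq : rho^2 = Rsq := Real.sq_sqrt hRsq_pos.le
  have hmupos : 0 < mu := Real.sqrt_pos.2 h1lam
  have hrhopos : 0 < rho := Real.sqrt_pos.2 hRsq_pos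
  set P : Eu n →L[ℝ] Eu n := (innerSL ℝ a).smulRight a with hP
  refine ⟨rho⁻¹ • (ContinuousLinearMap.id ℝ (Eu n) + (mu - 1) • P),
    (-(mu * β / rho)) • a, ?_, ?_⟩
  · intro y hyn hygm hylm
    set t := ⟪a, y⟫_ℝ with ht
    have htm : (t - m)^2 ≤ u := by
      rw [hudef]
      apply sq_le_sq' <;> linarith
    have hineq : (1+lam)*(t-β)^2 + (‖y‖^2 - t^2) ≤ Rsq := by
      have expand : Rsq - ((1+lam)*(t - β)^2 + (‖y‖^2 - t^2))
          = (1 - ‖y‖^2) + lam*(u - (t-m)^2) := by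
        rw [hRsqdef, hβdef]; field_simp; ring
      have hy2 : ‖y‖^2 ≤ 1 := by nlinarith [norm_nonneg y]
      nlinarith [mul_nonneg hlam.le (sub_nonneg.2 htm)]
    set z1 : Eu n := rho⁻¹ • (y - t • a) with hz1
    set z2 : Eu n := (mu*(t-β)/rho) • a with hz2
    have hMy : (rho⁻¹ • (ContinuousLinearMap.id ℝ (Eu n) + (mu - 1) • P)) y
        + (-(mu * β / rho)) • a = z1 + z2 := by
      rw [hz1, hz2, hP]
      simp only [ContinuousLinearMap.smul_apply, ContinuousLinearMap.add_apply,
        ContinuousLinearMap.id_apply, ContinuousLinearMap.smulRight_apply, innerSL_apply_apply, ← ht]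
      rw [div_eq_mul_inv]
      module
    have hinner_ya : ⟪y, a⟫_ℝ = t := by rw [real_inner_comm]
    have haa : ⟪a, a⟫_ℝ = 1 := by rw [real_inner_self_eq_norm_sq, ha]; norm_num
    have horth : ⟪z1, z2⟫_ℝ = 0 := by
      rw [hz1, hz2, real_inner_smul_left, real_inner_smul_right, inner_sub_left,
        real_inner_smul_left, hinner_ya, haa]
      ring
    have hz1n : ‖z1‖^2 = rho⁻¹^2 * (‖y‖^2 - t^2) := by
      rw [hz1, norm_smul, Real.norm_eq_abs, abs_of_pos (by positivity), mul_pow]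
      congr 1
      rw [norm_sub_sq_real, real_inner_smul_right, hinner_ya, norm_smul,
        Real.norm_eq_abs, mul_pow, sq_abs, ha]
      ring
    have hz2n : ‖z2‖^2 = (mu*(t-β)/rho)^2 := by
      rw [hz2, norm_smul, Real.norm_eq_abs, mul_pow, sq_abs, ha]
      ring
    have hsq : ‖(rho⁻¹ • (ContinuousLinearMap.id ℝ (Eu n) + (mu - 1) • P)) y
        + (-(mu * β / rho)) • a‖^2 ≤ 1 := by
      rw [hMy, norm_add_sq_real, horth, hz1n, hz2n]
      have heq2 : rho⁻¹ ^ 2 * (‖y‖ ^ 2 - t ^ 2) + 2 * 0 + (mu * (t - β) / rho) ^ 2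
          = ((1+lam)*(t-β)^2 + (‖y‖^2 - t^2)) / Rsq := by
        rw [div_pow, mul_pow, hmusq, inv_pow, ← hrhosq]
        field_simp
        ring
      rw [heq2, div_le_one hRsq_pos]
      exact hineq
    exact (pow_le_one_iff_of_nonneg (norm_nonneg _) two_ne_zero).1 hsq
  · have hfrank : Module.finrank ℝ (Eu n) = n := finrank_euclideanSpace_fin
    have hdetM : LinearMap.det (((rho⁻¹ • (ContinuousLinearMap.id ℝ (Eu n) + (mu - 1) • P)) :
        Eu n →L[ℝ] Eu n) : Eu n →ₗ[ℝ] Eu n) = rho⁻¹^n * mu := by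
      rw [ContinuousLinearMap.coe_smul, LinearMap.det_smul, hfrank, hP]
      rw [det_aux a ha (mu - 1)]
      ring
    rw [hdetM, abs_of_pos (by positivity)]
    -- the factor exceeds one
    have hBern : (1 + lam*u)^n < 1 + lam := by
      have hb := bernoulli_aux' n (lam*u) (by positivity)
      have hpos1 : 0 < 1 - (n:ℝ)*(lam*u) := by
        nlinarith [mul_nonneg (mul_nonneg hnpos.le hu0) hlam.le]
      have hgt : 1 < (1+lam)*(1 - (n:ℝ)*(lam*u)) := by nlinarith
      nlinarith [pow_nonneg (by positivity : (0:ℝ) ≤ 1 + lam*u) n]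
    have hRn : Rsq^n ≤ (1+lam*u)^n := pow_le_pow_left₀ hRsq_pos.le hRsq_le n
    have hmurho : rho^n < mu := by
      have h1 : (rho^n)^2 = Rsq^n := by rw [← pow_mul, mul_comm, pow_mul, hrhosq]
      have h2 : (rho^n)^2 < mu^2 := by
        rw [h1, hmusq]
        exact lt_of_le_of_lt hRn hBern
      nlinarith [pow_pos hrhopos n]
    have heq3 : rho⁻¹^n * mu = mu / rho^n := by rw [inv_pow, inv_mul_eq_div]
    rw [heq3, lt_div_iff₀ (pow_pos hrhopos n), one_mul]
    exact hmurho

set_option maxHeartbeats 1000000 in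
private lemma exists_max {n : ℕ} (K : Set (Eu n)) (c : Eu n) (r : ℝ) (hrpos : 0 < r)
    (hball : Metric.closedBall c r ⊆ K) (R₁ : ℝ) (hR₁pos : 0 < R₁)
    (hKR : ∀ x ∈ K, ‖x‖ ≤ R₁) :
    ∃ p : (Eu n →L[ℝ] Eu n) × Eu n,
      (∀ x ∈ K, ‖p.1 x + p.2‖ ≤ 1) ∧
      0 < |LinearMap.det ((p.1 : Eu n →L[ℝ] Eu n) : Eu n →ₗ[ℝ] Eu n)| ∧
      ∀ q : (Eu n →L[ℝ] Eu n) × Eu n, (∀ x ∈ K, ‖q.1 x + q.2‖ ≤ 1) →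
        |LinearMap.det ((q.1 : Eu n →L[ℝ] Eu n) : Eu n →ₗ[ℝ] Eu n)| ≤
        |LinearMap.det ((p.1 : Eu n →L[ℝ] Eu n) : Eu n →ₗ[ℝ] Eu n)| := by
  classical
  have hcK : c ∈ K := hball (Metric.mem_closedBall_self hrpos.le)
  set S : Set ((Eu n →L[ℝ] Eu n) × Eu n) := {p | ∀ x ∈ K, ‖p.1 x + p.2‖ ≤ 1} with hS
  have hSclosed : IsClosed S := by
    have : S = ⋂ x ∈ K, {p : (Eu n →L[ℝ] Eu n) × Eu n | ‖p.1 x + p.2‖ ≤ 1} := by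
      ext p; simp [hS]
    rw [this]
    refine isClosed_biInter fun x hx => isClosed_le ?_ continuous_const
    exact ((((ContinuousLinearMap.apply ℝ (Eu n) x).continuous.comp
      continuous_fst).add continuous_snd)).norm
  set C : ℝ := max (2/r) (1 + (2/r)*‖c‖) with hC
  have hSsub : S ⊆ Metric.closedBall 0 C := by
    intro p hp
    have hop : ‖p.1‖ ≤ 2/r := by
      refine p.1.opNorm_le_bound (by positivity) fun y => ?_
      rcases eq_or_ne y 0 with rfl | hy
      · simp
      · have hyn : 0 < ‖y‖ := norm_pos_iff.2 hy
        set z := (r/‖y‖) • y with hz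
        have hzn : ‖z‖ = r := by
          rw [hz, norm_smul, Real.norm_eq_abs, abs_of_pos (by positivity)]
          field_simp
        have hczK : c + z ∈ K := hball (by
          rw [Metric.mem_closedBall, dist_eq_norm, add_sub_cancel_left, hzn])
        have h1 : ‖p.1 (c + z) + p.2‖ ≤ 1 := hp _ hczK
        have h2 : ‖p.1 c + p.2‖ ≤ 1 := hp _ hcK
        have h3 : ‖p.1 z‖ ≤ 2 := by
          have heq : p.1 z = (p.1 (c + z) + p.2) - (p.1 c + p.2) := by
            rw [map_add]; abel
          rw [heq]
          exact le_trans (norm_sub_le _ _) (by linarith)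
        have h5 : ‖p.1 z‖ = (r/‖y‖) * ‖p.1 y‖ := by
          rw [hz, map_smul, norm_smul, Real.norm_eq_abs, abs_of_pos (by positivity)]
        rw [h5] at h3
        have h6 := mul_le_mul_of_nonneg_left h3 (by positivity : (0:ℝ) ≤ ‖y‖/r)
        calc ‖p.1 y‖ = (‖y‖/r) * ((r/‖y‖) * ‖p.1 y‖) := by field_simp
          _ ≤ (‖y‖/r) * 2 := h6
          _ = 2/r * ‖y‖ := by ring
    have hb2 : ‖p.2‖ ≤ 1 + (2/r)*‖c‖ := by
      have h2 : ‖p.1 c + p.2‖ ≤ 1 := hp _ hcK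
      have h7 : ‖(p.1 c + p.2) - p.1 c‖ ≤ ‖p.1 c + p.2‖ + ‖p.1 c‖ := norm_sub_le _ _
      rw [add_sub_cancel_left] at h7
      have hc1 : ‖p.1 c‖ ≤ (2/r) * ‖c‖ :=
        le_trans (p.1.le_opNorm c) (mul_le_mul_of_nonneg_right hop (norm_nonneg c))
      linarith
    rw [Metric.mem_closedBall, dist_zero_right, Prod.norm_def]
    exact max_le (le_trans hop (le_max_left _ _)) (le_trans hb2 (le_max_right _ _))
  have hScompact : IsCompact S :=
    (isCompact_closedBall (0 : (Eu n →L[ℝ] Eu n) × Eu n) C).of_isClosed_subset hSclosed hSsub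
  set p₀ : (Eu n →L[ℝ] Eu n) × Eu n := (R₁⁻¹ • ContinuousLinearMap.id ℝ (Eu n), (0:Eu n))
    with hp₀def
  have hp₀S : p₀ ∈ S := by
    intro x hx
    simp only [hp₀def, ContinuousLinearMap.smul_apply, ContinuousLinearMap.id_apply, add_zero]
    rw [norm_smul, Real.norm_eq_abs, abs_of_pos (by positivity)]
    rw [inv_mul_le_iff₀ hR₁pos, mul_one]
    exact hKR x hx
  set f : ((Eu n →L[ℝ] Eu n) × Eu n) → ℝ :=
    fun p => |LinearMap.det ((p.1 : Eu n →L[ℝ] Eu n) : Eu n →ₗ[ℝ] Eu n)| with hf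
  have hfcont : Continuous f :=
    (ContinuousLinearMap.continuous_det.comp continuous_fst).abs
  obtain ⟨p, hpS, hpmax⟩ := hScompact.exists_isMaxOn ⟨p₀, hp₀S⟩ hfcont.continuousOn
  have hfrank : Module.finrank ℝ (Eu n) = n := finrank_euclideanSpace_fin
  have hfp₀ : f p₀ = (R₁⁻¹)^n := by
    rw [hf]
    show |LinearMap.det ((R₁⁻¹ • ContinuousLinearMap.id ℝ (Eu n) :
      Eu n →L[ℝ] Eu n) : Eu n →ₗ[ℝ] Eu n)| = _
    rw [ContinuousLinearMap.coe_smul, ContinuousLinearMap.coe_id, LinearMap.det_smul,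
      LinearMap.det_id, hfrank, mul_one, abs_of_pos (by positivity)]
  have hfp₀pos : 0 < f p₀ := by rw [hfp₀]; positivity
  exact ⟨p, hpS, lt_of_lt_of_le hfp₀pos (hpmax hp₀S), fun q hq => hpmax hq⟩

set_option maxHeartbeats 1000000 in
/-- every convex body has an invertible affine image contained in
the unit ball all of whose widths are at least `2/√n` (so the affine
width-to-circumradius ratio is at least `1/√n`). -/
theorem stmt19 (n : ℕ) (hn : 1 ≤ n)
    (K : Set (EuclideanSpace ℝ (Fin n)))
    (hKcompact : IsCompact K) (hKconv : Convex ℝ K) (hKint : (interior K).Nonempty) :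
    ∃ A : EuclideanSpace ℝ (Fin n) ≃ᵃ[ℝ] EuclideanSpace ℝ (Fin n),
      ⇑A '' K ⊆ Metric.closedBall 0 1 ∧
      ∀ a : EuclideanSpace ℝ (Fin n), ‖a‖ = 1 →
        2 / Real.sqrt n ≤
          sSup ((fun x => ⟪a, x⟫_ℝ) '' (⇑A '' K)) +
          sSup ((fun x => ⟪-a, x⟫_ℝ) '' (⇑A '' K)) := by
  classical
  -- inner ball
  obtain ⟨c, hc⟩ := hKint
  obtain ⟨r0, hr0, hball0⟩ := Metric.isOpen_iff.1 isOpen_interior c hc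
  have hrpos : 0 < r0/2 := by positivity
  have hball : Metric.closedBall c (r0/2) ⊆ K := by
    intro x hx
    refine interior_subset (hball0 ?_)
    have := Metric.mem_closedBall.1 hx
    rw [Metric.mem_ball]
    linarith
  have hcK : c ∈ K := hball (Metric.mem_closedBall_self hrpos.le)
  -- outer ball
  obtain ⟨R0, hR0⟩ := hKcompact.isBounded.subset_closedBall 0
  have hR₁pos : (0:ℝ) < max R0 1 := lt_of_lt_of_le one_pos (le_max_right _ _)
  have hKR : ∀ x ∈ K, ‖x‖ ≤ max R0 1 := fun x hx => le_trans
    (mem_closedBall_zero_iff.1 (hR0 hx)) (le_max_left _ _)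
  obtain ⟨p, hpS, hppos, hpmax⟩ := exists_max K c (r0/2) hrpos hball (max R0 1) hR₁pos hKR
  have hdet : LinearMap.det ((p.1 : Eu n →L[ℝ] Eu n) : Eu n →ₗ[ℝ] Eu n) ≠ 0 := by
    intro h
    rw [h, abs_zero] at hppos
    exact lt_irrefl _ hppos
  -- the affine equivalence
  set e : Eu n ≃ₗ[ℝ] Eu n := LinearMap.equivOfDetNeZero _ hdet with he
  have hecoe : ∀ x, e x = p.1 x := by
    intro x
    have h1 : (e : Eu n →ₗ[ℝ] Eu n) = ((p.1 : Eu n →L[ℝ] Eu n) : Eu n →ₗ[ℝ] Eu n) :=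
      LinearEquiv.coe_ofIsUnitDet _
    calc e x = ((e : Eu n →ₗ[ℝ] Eu n) : Eu n → Eu n) x := rfl
      _ = p.1 x := by rw [h1]; rfl
  set A : Eu n ≃ᵃ[ℝ] Eu n := e.toAffineEquiv.trans (AffineEquiv.constVAdd ℝ (Eu n) p.2)
    with hA
  have hAx : ∀ x, A x = p.1 x + p.2 := by
    intro x
    simp only [hA, AffineEquiv.trans_apply, AffineEquiv.constVAdd_apply,
      LinearEquiv.coe_toAffineEquiv, vadd_eq_add]
    rw [hecoe]
    exact add_comm _ _
  have hsub : ⇑A '' K ⊆ Metric.closedBall 0 1 := by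
    rintro _ ⟨x, hx, rfl⟩
    rw [mem_closedBall_zero_iff, hAx]
    exact hpS x hx
  refine ⟨A, hsub, ?_⟩
  intro a ha
  by_contra hcon
  push_neg at hcon
  -- support function setup
  have hKimne : (⇑A '' K).Nonempty := ⟨A c, mem_image_of_mem _ hcK⟩
  have hy1 : ∀ y ∈ ⇑A '' K, ‖y‖ ≤ 1 := fun y hy => mem_closedBall_zero_iff.1 (hsub hy)
  have hbddp : BddAbove ((fun x => ⟪a, x⟫_ℝ) '' (⇑A '' K)) := by
    refine ⟨1, ?_⟩
    rintro _ ⟨y, hy, rfl⟩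
    calc ⟪a, y⟫_ℝ ≤ ‖a‖ * ‖y‖ := real_inner_le_norm a y
      _ ≤ 1 := by rw [ha, one_mul]; exact hy1 y hy
  have hbddm : BddAbove ((fun x => ⟪-a, x⟫_ℝ) '' (⇑A '' K)) := by
    refine ⟨1, ?_⟩
    rintro _ ⟨y, hy, rfl⟩
    calc ⟪-a, y⟫_ℝ ≤ ‖-a‖ * ‖y‖ := real_inner_le_norm _ y
      _ ≤ 1 := by rw [norm_neg, ha, one_mul]; exact hy1 y hy
  set Hp := sSup ((fun x => ⟪a, x⟫_ℝ) '' (⇑A '' K)) with hHp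
  set Hm := sSup ((fun x => ⟪-a, x⟫_ℝ) '' (⇑A '' K)) with hHm
  have hle : ∀ y ∈ ⇑A '' K, ⟪a, y⟫_ℝ ≤ Hp := fun y hy =>
    le_csSup hbddp (mem_image_of_mem _ hy)
  have hge : ∀ y ∈ ⇑A '' K, -Hm ≤ ⟪a, y⟫_ℝ := by
    intro y hy
    have h9 : ⟪-a, y⟫_ℝ ≤ Hm := le_csSup hbddm (mem_image_of_mem _ hy)
    rw [inner_neg_left] at h9
    linarith
  have hHp1 : Hp ≤ 1 := by
    refine csSup_le (hKimne.image _) ?_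
    rintro _ ⟨y, hy, rfl⟩
    calc ⟪a, y⟫_ℝ ≤ ‖a‖ * ‖y‖ := real_inner_le_norm a y
      _ ≤ 1 := by rw [ha, one_mul]; exact hy1 y hy
  have hHm1 : Hm ≤ 1 := by
    refine csSup_le (hKimne.image _) ?_
    rintro _ ⟨y, hy, rfl⟩
    calc ⟪-a, y⟫_ℝ ≤ ‖-a‖ * ‖y‖ := real_inner_le_norm _ y
      _ ≤ 1 := by rw [norm_neg, ha, one_mul]; exact hy1 y hy
  obtain ⟨y₀, hy₀⟩ := hKimne
  have h0 : 0 ≤ Hp + Hm := by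
    have h1 := hle y₀ hy₀
    have h2 := hge y₀ hy₀
    linarith
  have hHpm1 : -1 ≤ Hp := by
    have h1 := hle y₀ hy₀
    have h2 : -(1:ℝ) ≤ ⟪a, y₀⟫_ℝ := by
      have h4 := abs_real_inner_le_norm a y₀
      have h3 : ‖a‖ * ‖y₀‖ ≤ 1 := by rw [ha, one_mul]; exact hy1 y₀ hy₀
      exact (abs_le.1 (le_trans h4 h3)).1
    linarith
  have hHmm1 : -1 ≤ Hm := by
    have h1 : ⟪-a, y₀⟫_ℝ ≤ Hm := le_csSup hbddm (mem_image_of_mem _ hy₀)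
    have h2 : -(1:ℝ) ≤ ⟪-a, y₀⟫_ℝ := by
      have h4 := abs_real_inner_le_norm (-a) y₀
      have h3 : ‖-a‖ * ‖y₀‖ ≤ 1 := by rw [norm_neg, ha, one_mul]; exact hy1 y₀ hy₀
      exact (abs_le.1 (le_trans h4 h3)).1
    linarith
  -- scalar data
  have hsqn : (0:ℝ) < Real.sqrt n := Real.sqrt_pos.2 (by exact_mod_cast hn)
  have hwlt : (Hp + Hm)/2 < 1/Real.sqrt n := by
    have h2 : 2/Real.sqrt n = 2*(1/Real.sqrt n) := by ring
    rw [h2] at hcon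
    linarith
  have hnpos : (0:ℝ) < n := by exact_mod_cast hn
  have hw0 : 0 ≤ (Hp + Hm)/2 := by linarith
  have hnw : (n:ℝ) * ((Hp + Hm)/2)^2 < 1 := by
    have h2 : ((Hp + Hm)/2)^2 < (1/Real.sqrt n)^2 := by
      apply pow_lt_pow_left₀ hwlt hw0
      norm_num
    have h3 : (1/Real.sqrt n)^2 = 1/(n:ℝ) := by
      rw [div_pow, one_pow, Real.sq_sqrt (le_of_lt hnpos)]
    rw [h3] at h2
    calc (n:ℝ) * ((Hp + Hm)/2)^2 < (n:ℝ) * (1/(n:ℝ)) := mul_lt_mul_of_pos_left h2 hnpos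
      _ = 1 := by field_simp
  have hm2 : ((Hp - Hm)/2)^2 ≤ 1 := sq_mid_le_one hHpm1 hHp1 hHmm1 hHm1
  obtain ⟨M, v, hMv, hMdet⟩ := squeeze hn a ha ((Hp - Hm)/2) ((Hp + Hm)/2) hw0 hm2 hnw
  -- the improved map
  have hqS : ∀ x ∈ K, ‖(M.comp p.1) x + (M p.2 + v)‖ ≤ 1 := by
    intro x hx
    have heq : (M.comp p.1) x + (M p.2 + v) = M (p.1 x + p.2) + v := by
      rw [ContinuousLinearMap.comp_apply, map_add]
      abel
    rw [heq]
    have hmem : p.1 x + p.2 ∈ ⇑A '' K := ⟨x, hx, (hAx x)⟩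
    refine hMv _ (hy1 _ hmem) ?_ ?_
    · have := hge _ hmem; linarith
    · have := hle _ hmem; linarith
  have hcontr := hpmax (M.comp p.1, M p.2 + v) hqS
  have hdetq : |LinearMap.det (((M.comp p.1 : Eu n →L[ℝ] Eu n)) : Eu n →ₗ[ℝ] Eu n)|
      = |LinearMap.det ((M : Eu n →L[ℝ] Eu n) : Eu n →ₗ[ℝ] Eu n)| *
        |LinearMap.det ((p.1 : Eu n →L[ℝ] Eu n) : Eu n →ₗ[ℝ] Eu n)| := by
    rw [ContinuousLinearMap.toLinearMap_comp, LinearMap.det_comp, abs_mul]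
  rw [hdetq] at hcontr
  have hlt : |LinearMap.det ((p.1 : Eu n →L[ℝ] Eu n) : Eu n →ₗ[ℝ] Eu n)|
      < |LinearMap.det ((M : Eu n →L[ℝ] Eu n) : Eu n →ₗ[ℝ] Eu n)| *
        |LinearMap.det ((p.1 : Eu n →L[ℝ] Eu n) : Eu n →ₗ[ℝ] Eu n)| := by
    calc |LinearMap.det ((p.1 : Eu n →L[ℝ] Eu n) : Eu n →ₗ[ℝ] Eu n)|
        = 1 * |LinearMap.det ((p.1 : Eu n →L[ℝ] Eu n) : Eu n →ₗ[ℝ] Eu n)| := (one_mul _).symm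
      _ < _ := mul_lt_mul_of_pos_right hMdet hppos
  exact absurd hcontr (not_le.2 hlt)
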